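/- arXiv:2404.03383 — 2 statements merged into one kernel-verified Lean document; each statement's English description precedes it below -/
import Mathlib

section
/- Let f, h : ℝⁿ → ℝ be differentiable convex functions with f σ-uniformly convex with respect to h (D_f(y,x) ≥ σ D_h(y,x) for all x,y, σ ≥ 0), h twice differentiable, x* a minimizer of f, and let α, δ, η, ν : [t₀,T] → ℝ be differentiable functions satisfying: (i) ν̇(t) ≤ e^{α(t)}; (ii) −[δ̇+η̇−α̇−e^{α}] + [ν̇+η̇] ≤ 0; (iii) [δ̇+η̇−α̇−e^{α}] − σ e^{−η+α} ≤ 0; (iv) −[δ̇+η̇−α̇−e^{α}] ≤ 0 on [t₀,T]. If (x(t), z(t)) solves the system ẋ = e^{α}(z − x), ∇²h(z) ż = −(δ̇+η̇−α̇−e^{α})[∇h(z) − ∇h(x)] − e^{−η+α} ∇f(x), then V(t) = e^{ν(t)} ( e^{η(t)} D_h(x*, z(t)) + f(x(t)) − f(x*) ) satisfies V̇(t) ≤ 0 on [t₀,T]. -/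
open Real Set

local notation "⟪" x ", " y "⟫" => @inner ℝ _ _ x y

lemma grad_ineq_aux {n : ℕ} {f : EuclideanSpace ℝ (Fin n) → ℝ}
    {f' : EuclideanSpace ℝ (Fin n) → EuclideanSpace ℝ (Fin n)}
    (hconv : ConvexOn ℝ Set.univ f) (hgrad : ∀ x, HasGradientAt f (f' x) x)
    (x y : EuclideanSpace ℝ (Fin n)) :
    f x + ⟪f' x, y - x⟫ ≤ f y := by
  set g : ℝ → ℝ := fun s => f (x + s • (y - x)) with hg
  have hgc : ConvexOn ℝ Set.univ g := by
    have := hconv.comp_affineMap (AffineMap.lineMap x y)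
    have heq : g = f ∘ (AffineMap.lineMap x y) := by
      funext s
      simp [g, AffineMap.lineMap_apply, vsub_eq_sub, vadd_eq_add]
      congr 1
      module
    rw [heq]
    simpa using this
  have hc : HasDerivAt (fun s : ℝ => x + s • (y - x)) (y - x) 0 := by
    simpa using ((hasDerivAt_id (0:ℝ)).smul_const (y - x)).const_add x
  have hgd : HasDerivAt g ⟪f' x, y - x⟫ 0 := by
    have h0 : HasFDerivAt f (InnerProductSpace.toDual ℝ _ (f' (x + (0:ℝ) • (y - x)))) (x + (0:ℝ) • (y - x)) :=
      (hgrad _).hasFDerivAt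
    have := h0.comp_hasDerivAt 0 hc
    simpa [g, InnerProductSpace.toDual_apply_apply, Function.comp_def] using this
  have hs := hgc.le_slope_of_hasDerivAt (mem_univ (0:ℝ)) (mem_univ (1:ℝ)) one_pos hgd
  have hsl : slope g 0 1 = f y - f x := by
    simp [slope_def_field, g]
  rw [hsl] at hs
  linarith

theorem lyapunov_nonincreasing (n : ℕ)
    (f h : EuclideanSpace ℝ (Fin n) → ℝ)
    (f' h' : EuclideanSpace ℝ (Fin n) → EuclideanSpace ℝ (Fin n))
    (h'' : EuclideanSpace ℝ (Fin n) → EuclideanSpace ℝ (Fin n) →L[ℝ] EuclideanSpace ℝ (Fin n))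
    (hfconv : ConvexOn ℝ Set.univ f) (hhconv : ConvexOn ℝ Set.univ h)
    (hfgrad : ∀ x, HasGradientAt f (f' x) x)
    (hhgrad : ∀ x, HasGradientAt h (h' x) x)
    (hhess : ∀ x, HasFDerivAt h' (h'' x) x)
    (Df Dh : EuclideanSpace ℝ (Fin n) → EuclideanSpace ℝ (Fin n) → ℝ)
    (hDf : ∀ y x, Df y x = f y - f x - ⟪f' x, y - x⟫)
    (hDh : ∀ y x, Dh y x = h y - h x - ⟪h' x, y - x⟫)
    (σ : ℝ) (hσ : 0 ≤ σ)
    (hunif : ∀ x y, σ * Dh y x ≤ Df y x)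
    (xstar : EuclideanSpace ℝ (Fin n)) (hmin : ∀ y, f xstar ≤ f y)
    (t₀ T : ℝ)
    (α δ η ν α' δ' η' ν' : ℝ → ℝ)
    (hα : ∀ t ∈ Set.Icc t₀ T, HasDerivAt α (α' t) t)
    (hδ : ∀ t ∈ Set.Icc t₀ T, HasDerivAt δ (δ' t) t)
    (hη : ∀ t ∈ Set.Icc t₀ T, HasDerivAt η (η' t) t)
    (hν : ∀ t ∈ Set.Icc t₀ T, HasDerivAt ν (ν' t) t)
    (cond1 : ∀ t ∈ Set.Icc t₀ T, ν' t ≤ Real.exp (α t))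
    (cond2 : ∀ t ∈ Set.Icc t₀ T,
      -(δ' t + η' t - α' t - Real.exp (α t)) + (ν' t + η' t) ≤ 0)
    (cond3 : ∀ t ∈ Set.Icc t₀ T,
      (δ' t + η' t - α' t - Real.exp (α t)) - σ * Real.exp (-η t + α t) ≤ 0)
    (cond4 : ∀ t ∈ Set.Icc t₀ T,
      -(δ' t + η' t - α' t - Real.exp (α t)) ≤ 0)
    (x z z' : ℝ → EuclideanSpace ℝ (Fin n))
    (hxode : ∀ t ∈ Set.Icc t₀ T,
      HasDerivAt x (Real.exp (α t) • (z t - x t)) t)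
    (hzdiff : ∀ t ∈ Set.Icc t₀ T, HasDerivAt z (z' t) t)
    (hzode : ∀ t ∈ Set.Icc t₀ T,
      h'' (z t) (z' t) =
        -(δ' t + η' t - α' t - Real.exp (α t)) • (h' (z t) - h' (x t))
          - Real.exp (-η t + α t) • f' (x t))
    (V : ℝ → ℝ)
    (hV : ∀ t, V t = Real.exp (ν t) *
      (Real.exp (η t) * Dh xstar (z t) + (f (x t) - f xstar))) :
    AntitoneOn V (Set.Icc t₀ T) := by
  -- nonnegativity of Bregman divergences
  have hDhpos : ∀ p q, 0 ≤ Dh p q := by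
    intro p q; rw [hDh]
    have := grad_ineq_aux hhconv hhgrad q p; linarith
  have hDfpos : ∀ p q, 0 ≤ Df p q := by
    intro p q; rw [hDf]
    have := grad_ineq_aux hfconv hfgrad q p; linarith
  have hVfun : V = fun t => Real.exp (ν t) *
      (Real.exp (η t) * Dh xstar (z t) + (f (x t) - f xstar)) := funext hV
  -- derivative with explicit sign-controlled value
  have key : ∀ t ∈ Set.Icc t₀ T, ∃ E : ℝ, HasDerivAt V E t ∧ E ≤ 0 := by
    intro t ht
    have hz := hzdiff t ht
    have hx := hxode t ht
    have hη' := hη t ht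
    have hν' := hν t ht
    -- derivative of h ∘ z
    have hhz : HasDerivAt (fun s => h (z s)) ⟪h' (z t), z' t⟫ t := by
      have := (hhgrad (z t)).hasFDerivAt.comp_hasDerivAt t hz
      simpa [InnerProductSpace.toDual_apply_apply, Function.comp_def] using this
    -- derivative of h' ∘ z
    have hh'z : HasDerivAt (fun s => h' (z s)) (h'' (z t) (z' t)) t :=
      (hhess (z t)).comp_hasDerivAt t hz
    -- derivative of the inner product term
    have hinner : HasDerivAt (fun s => ⟪h' (z s), xstar - z s⟫)
        (⟪h' (z t), -(z' t)⟫ + ⟪h'' (z t) (z' t), xstar - z t⟫) t := by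
      have := HasDerivAt.inner ℝ hh'z ((hasDerivAt_const t xstar).sub hz)
      simpa [zero_sub] using this
    -- derivative of Dh xstar (z ·)
    have hDhz : HasDerivAt (fun s => Dh xstar (z s))
        (-⟪h'' (z t) (z' t), xstar - z t⟫) t := by
      have h1 : (fun s => Dh xstar (z s)) =
          fun s => h xstar - h (z s) - ⟪h' (z s), xstar - z s⟫ := by
        funext s; rw [hDh]
      rw [h1]
      have h2 := ((hasDerivAt_const t (h xstar)).sub hhz).sub hinner
      convert h2 using 1
      case e'_9 => simp [inner_neg_right]
      all_goals rfl
    -- derivative of f ∘ x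
    have hfx : HasDerivAt (fun s => f (x s))
        (Real.exp (α t) * ⟪f' (x t), z t - x t⟫) t := by
      have := (hfgrad (x t)).hasFDerivAt.comp_hasDerivAt t hx
      simpa [InnerProductSpace.toDual_apply_apply, real_inner_smul_right, Function.comp_def] using this
    -- inner expression and its derivative
    have hG : HasDerivAt (fun s => Real.exp (η s) * Dh xstar (z s) + (f (x s) - f xstar))
        (Real.exp (η t) * η' t * Dh xstar (z t)
          + Real.exp (η t) * (-⟪h'' (z t) (z' t), xstar - z t⟫)
          + Real.exp (α t) * ⟪f' (x t), z t - x t⟫) t := by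
      have := (hη'.exp.mul hDhz).add (hfx.sub_const (f xstar))
      convert this using 1
      try ring
      all_goals rfl
    have hVd : HasDerivAt V
        (Real.exp (ν t) * ν' t *
            (Real.exp (η t) * Dh xstar (z t) + (f (x t) - f xstar))
          + Real.exp (ν t) *
            (Real.exp (η t) * η' t * Dh xstar (z t)
              + Real.exp (η t) * (-⟪h'' (z t) (z' t), xstar - z t⟫)
              + Real.exp (α t) * ⟪f' (x t), z t - x t⟫)) t := by
      rw [hVfun]
      exact hν'.exp.mul hG
    refine ⟨_, hVd, ?_⟩
    -- now the sign analysis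
    set c : ℝ := δ' t + η' t - α' t - Real.exp (α t) with hc
    have hexpne : Real.exp (η t) ≠ 0 := (Real.exp_pos _).ne'
    have hexpeq : Real.exp (-η t + α t) = Real.exp (α t) / Real.exp (η t) := by
      rw [eq_div_iff hexpne, ← Real.exp_add]; ring_nf
    have hEeq : Real.exp (ν t) * ν' t *
            (Real.exp (η t) * Dh xstar (z t) + (f (x t) - f xstar))
          + Real.exp (ν t) *
            (Real.exp (η t) * η' t * Dh xstar (z t)
              + Real.exp (η t) * (-⟪h'' (z t) (z' t), xstar - z t⟫)
              + Real.exp (α t) * ⟪f' (x t), z t - x t⟫)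
        = Real.exp (ν t) *
            ((ν' t + η' t - c) * (Real.exp (η t) * Dh xstar (z t))
              + (c * (Real.exp (η t) * Dh xstar (x t)) - Real.exp (α t) * Df xstar (x t))
              + (-(c * (Real.exp (η t) * Dh (z t) (x t))))
              + (ν' t - Real.exp (α t)) * (f (x t) - f xstar)) := by
      have hz' := hzode t ht
      rw [← hc] at hz'
      simp only [hDh, hDf, hz', inner_sub_left, inner_sub_right, real_inner_smul_left,
        inner_neg_left, hexpeq]
      field_simp
      ring
    rw [hEeq]
    have hcnn : 0 ≤ c := by have := cond4 t ht; rw [← hc] at this; linarith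
    have t1 : (ν' t + η' t - c) * (Real.exp (η t) * Dh xstar (z t)) ≤ 0 := by
      have h1 : ν' t + η' t - c ≤ 0 := by
        have := cond2 t ht; rw [← hc] at this; linarith
      exact mul_nonpos_of_nonpos_of_nonneg h1
        (mul_nonneg (Real.exp_nonneg _) (hDhpos _ _))
    have t2 : c * (Real.exp (η t) * Dh xstar (x t)) - Real.exp (α t) * Df xstar (x t) ≤ 0 := by
      have h1 : c ≤ σ * Real.exp (-η t + α t) := by
        have := cond3 t ht; rw [← hc] at this; linarith
      have h2 : c * (Real.exp (η t) * Dh xstar (x t)) ≤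
          (σ * Real.exp (-η t + α t)) * (Real.exp (η t) * Dh xstar (x t)) :=
        mul_le_mul_of_nonneg_right h1 (mul_nonneg (Real.exp_nonneg _) (hDhpos _ _))
      have h3 : (σ * Real.exp (-η t + α t)) * (Real.exp (η t) * Dh xstar (x t))
          = Real.exp (α t) * (σ * Dh xstar (x t)) := by
        rw [hexpeq]; field_simp
      have h4 : Real.exp (α t) * (σ * Dh xstar (x t)) ≤ Real.exp (α t) * Df xstar (x t) :=
        mul_le_mul_of_nonneg_left (hunif _ _) (Real.exp_nonneg _)
      linarith
    have t3 : -(c * (Real.exp (η t) * Dh (z t) (x t))) ≤ 0 := by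
      have := mul_nonneg hcnn (mul_nonneg (Real.exp_nonneg (η t)) (hDhpos (z t) (x t)))
      linarith
    have t4 : (ν' t - Real.exp (α t)) * (f (x t) - f xstar) ≤ 0 := by
      have h1 : ν' t - Real.exp (α t) ≤ 0 := by have := cond1 t ht; linarith
      exact mul_nonpos_of_nonpos_of_nonneg h1 (by have := hmin (x t); linarith)
    have hbr : (ν' t + η' t - c) * (Real.exp (η t) * Dh xstar (z t))
        + (c * (Real.exp (η t) * Dh xstar (x t)) - Real.exp (α t) * Df xstar (x t))
        + (-(c * (Real.exp (η t) * Dh (z t) (x t))))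
        + (ν' t - Real.exp (α t)) * (f (x t) - f xstar) ≤ 0 := by linarith
    have := mul_le_mul_of_nonneg_left hbr (Real.exp_nonneg (ν t))
    simpa using this
  apply antitoneOn_of_deriv_nonpos (convex_Icc t₀ T)
  · intro t ht
    obtain ⟨E, hE, -⟩ := key t ht
    exact hE.continuousAt.continuousWithinAt
  · intro t ht
    rw [interior_Icc] at ht
    obtain ⟨E, hE, -⟩ := key t (Ioo_subset_Icc_self ht)
    exact hE.differentiableAt.differentiableWithinAt
  · intro t ht
    rw [interior_Icc] at ht
    obtain ⟨E, hE, hEle⟩ := key t (Ioo_subset_Icc_self ht)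
    rw [hE.deriv]
    exact hEle
end

section
/- Let f : ℝⁿ → ℝ be convex differentiable with minimizer x*, and let x : [t₀,∞) → ℝⁿ (t₀ > 0) be a C² solution of ẍ(t) + (3/t) ẋ(t) + ∇f(x(t)) = 0. With z(t) = x(t) + (t/2) ẋ(t), the function V(t) = t² ( (4/t²)·(1/2)‖x* − z(t)‖² + f(x(t)) − f(x*) ) = 2‖x* − z(t)‖² + t²(f(x(t)) − f(x*)) is nonincreasing, and hence f(x(t)) − f(x*) ≤ V(t₀)/t² for all t ≥ t₀. -/
open Real Set

local notation "⟪" x ", " y "⟫" => @inner ℝ _ _ x y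

private lemma grad_ineq {n : ℕ} {f : EuclideanSpace ℝ (Fin n) → ℝ}
    {f' : EuclideanSpace ℝ (Fin n) → EuclideanSpace ℝ (Fin n)}
    (hfconv : ConvexOn ℝ Set.univ f)
    (hfgrad : ∀ x, HasGradientAt f (f' x) x)
    (a b : EuclideanSpace ℝ (Fin n)) :
    ⟪f' a, b - a⟫ ≤ f b - f a := by
  by_cases hab : b = a
  · simp [hab]
  · set L : ℝ →ᵃ[ℝ] EuclideanSpace ℝ (Fin n) := AffineMap.lineMap a b
    have hg : ConvexOn ℝ (L ⁻¹' Set.univ) (f ∘ L) := hfconv.comp_affineMap L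
    have hL : ∀ s : ℝ, L s = a + s • (b - a) := by
      intro s; simp [L, AffineMap.lineMap_apply]; module
    have hLd : HasDerivAt (fun s : ℝ => L s) (b - a) 0 := by
      simp only [hL]
      simpa using ((hasDerivAt_id (0:ℝ)).smul_const (b - a)).const_add a
    have hfd : HasFDerivAt f (InnerProductSpace.toDual ℝ _ (f' a)) a :=
      (hasGradientAt_iff_hasFDerivAt).1 (hfgrad a)
    have hcomp : HasDerivAt (f ∘ L) ⟪f' a, b - a⟫ 0 := by
      have hL0 : L 0 = a := by simp [hL]
      rw [← hL0] at hfd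
      have := hfd.comp_hasDerivAt 0 hLd
      simpa [InnerProductSpace.toDual_apply_apply, hL0] using this
    have := hg.le_slope_of_hasDerivAt (x := 0) (y := 1) (by simp) (by simp)
      one_pos hcomp
    have h1 : slope (f ∘ L) 0 1 = f b - f a := by
      simp [slope_def_field, hL, L]
    rw [h1] at this
    exact this

theorem nesterov_damping_lyapunov (n : ℕ)
    (f : EuclideanSpace ℝ (Fin n) → ℝ)
    (f' : EuclideanSpace ℝ (Fin n) → EuclideanSpace ℝ (Fin n))
    (hfconv : ConvexOn ℝ Set.univ f)
    (hfgrad : ∀ x, HasGradientAt f (f' x) x)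
    (xstar : EuclideanSpace ℝ (Fin n)) (hmin : ∀ y, f xstar ≤ f y)
    (t₀ : ℝ) (ht₀ : 0 < t₀)
    (x x' x'' : ℝ → EuclideanSpace ℝ (Fin n))
    (hx : ∀ t ∈ Set.Ici t₀, HasDerivAt x (x' t) t)
    (hx' : ∀ t ∈ Set.Ici t₀, HasDerivAt x' (x'' t) t)
    (hODE : ∀ t ∈ Set.Ici t₀, x'' t + (3 / t) • x' t + f' (x t) = 0)
    (z : ℝ → EuclideanSpace ℝ (Fin n))
    (hz : ∀ t, z t = x t + (t / 2) • x' t)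
    (V : ℝ → ℝ)
    (hV : ∀ t, V t = 2 * ‖xstar - z t‖ ^ 2 + t ^ 2 * (f (x t) - f xstar)) :
    AntitoneOn V (Set.Ici t₀) ∧
      ∀ t ∈ Set.Ici t₀, f (x t) - f xstar ≤ V t₀ / t ^ 2 := by
  -- derivative of V at each point of Ici t₀
  have hVd : ∀ t ∈ Set.Ici t₀,
      HasDerivAt V (2 * t * (⟪f' (x t), xstar - x t⟫ + (f (x t) - f xstar))) t := by
    intro t ht
    have htpos : (0:ℝ) < t := lt_of_lt_of_le ht₀ ht
    -- derivative of z
    have hzd : HasDerivAt z (-((t / 2) • f' (x t))) t := by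
      have hc : HasDerivAt (fun s : ℝ => s / 2) ((1:ℝ)/2) t := by
        simpa using (hasDerivAt_id t).div_const 2
      have h1 : HasDerivAt (fun s : ℝ => x s + (s / 2) • x' s)
          (x' t + ((t / 2) • x'' t + ((1:ℝ) / 2) • x' t)) t :=
        (hx t ht).add (hc.smul (hx' t ht))
      have hxx : x'' t = -((3 / t) • x' t + f' (x t)) := by
        apply eq_neg_of_add_eq_zero_left
        have h0 := hODE t ht
        rw [add_assoc] at h0
        exact h0
      have ht' : t ≠ 0 := ne_of_gt htpos
      have hts : t / 2 * (3 / t) = 3 / 2 := by field_simp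
      have h2 : x' t + ((t / 2) • x'' t + ((1:ℝ) / 2) • x' t) = -((t / 2) • f' (x t)) := by
        rw [hxx, smul_neg, smul_add, smul_smul, hts]
        module
      rw [h2] at h1
      apply h1.congr_of_eventuallyEq
      filter_upwards with s using (hz s)
    -- derivative of f ∘ x
    have hfx : HasDerivAt (fun s => f (x s)) ⟪f' (x t), x' t⟫ t := by
      have hfd : HasFDerivAt f (InnerProductSpace.toDual ℝ _ (f' (x t))) (x t) :=
        (hasGradientAt_iff_hasFDerivAt).1 (hfgrad (x t))
      have := hfd.comp_hasDerivAt t (hx t ht)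
      simp [InnerProductSpace.toDual_apply_apply] at this; exact this
    -- derivative of norm-square term
    have hw : HasDerivAt (fun s => xstar - z s) ((t / 2) • f' (x t)) t := by
      have := (hasDerivAt_const t xstar).sub hzd; simp at this; exact this
    have hn : HasDerivAt (fun s => ⟪xstar - z s, xstar - z s⟫)
        (⟪xstar - z t, (t / 2) • f' (x t)⟫ + ⟪(t / 2) • f' (x t), xstar - z t⟫) t :=
      hw.inner ℝ hw
    have hsq : HasDerivAt (fun s => (2:ℝ) * ‖xstar - z s‖ ^ 2)
        (2 * (⟪xstar - z t, (t / 2) • f' (x t)⟫ + ⟪(t / 2) • f' (x t), xstar - z t⟫)) t := by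
      have := hn.const_mul (2:ℝ)
      apply this.congr_of_eventuallyEq
      filter_upwards with s
      rw [real_inner_self_eq_norm_sq]
    have ht2 : HasDerivAt (fun s : ℝ => s ^ 2 * (f (x s) - f xstar))
        (2 * t * (f (x t) - f xstar) + t ^ 2 * ⟪f' (x t), x' t⟫) t := by
      have h1 : HasDerivAt (fun s : ℝ => s ^ 2) (2 * t) t := by
        simpa using (hasDerivAt_pow 2 t)
      have h2 := hfx.sub_const (f xstar)
      have := h1.mul h2; simp [mul_comm] at this ⊢; exact this
    have htot := hsq.add ht2
    have hEq : 2 * (⟪xstar - z t, (t / 2) • f' (x t)⟫ + ⟪(t / 2) • f' (x t), xstar - z t⟫) +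
        (2 * t * (f (x t) - f xstar) + t ^ 2 * ⟪f' (x t), x' t⟫)
        = 2 * t * (⟪f' (x t), xstar - x t⟫ + (f (x t) - f xstar)) := by
      rw [real_inner_smul_left, real_inner_smul_right, real_inner_comm]
      rw [hz t, show xstar - (x t + (t / 2) • x' t) = (xstar - x t) - (t/2) • x' t by module]
      rw [inner_sub_right, real_inner_smul_right]
      ring
    rw [hEq] at htot
    apply htot.congr_of_eventuallyEq
    filter_upwards with s using (hV s)
  -- the derivative is nonpositive
  have hnonpos : ∀ t ∈ Set.Ici t₀,
      2 * t * (⟪f' (x t), xstar - x t⟫ + (f (x t) - f xstar)) ≤ 0 := by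
    intro t ht
    have htpos : (0:ℝ) < t := lt_of_lt_of_le ht₀ ht
    have h1 : ⟪f' (x t), xstar - x t⟫ ≤ f xstar - f (x t) :=
      grad_ineq hfconv hfgrad (x t) xstar
    have h2 : ⟪f' (x t), xstar - x t⟫ + (f (x t) - f xstar) ≤ 0 := by linarith
    have := mul_nonpos_of_nonneg_of_nonpos (by positivity : (0:ℝ) ≤ 2 * t) h2
    exact this
  have hanti : AntitoneOn V (Set.Ici t₀) := by
    apply antitoneOn_of_deriv_nonpos (convex_Ici t₀)
    · intro t ht
      exact (hVd t ht).continuousAt.continuousWithinAt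
    · intro t ht
      rw [interior_Ici] at ht
      exact ((hVd t (Set.mem_Ici.2 (le_of_lt (Set.mem_Ioi.1 ht)))).differentiableAt).differentiableWithinAt
    · intro t ht
      rw [interior_Ici] at ht
      rw [(hVd t (Set.mem_Ici.2 (le_of_lt (Set.mem_Ioi.1 ht)))).deriv]
      exact hnonpos t (Set.mem_Ici.2 (le_of_lt (Set.mem_Ioi.1 ht)))
  refine ⟨hanti, ?_⟩
  intro t ht
  have htpos : (0:ℝ) < t := lt_of_lt_of_le ht₀ ht
  have h1 : t ^ 2 * (f (x t) - f xstar) ≤ V t := by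
    rw [hV t]
    have : (0:ℝ) ≤ 2 * ‖xstar - z t‖ ^ 2 := by positivity
    linarith
  have h2 : V t ≤ V t₀ := hanti (le_refl t₀) ht ht
  have ht2 : (0:ℝ) < t ^ 2 := by positivity
  rw [le_div_iff₀ ht2]
  calc (f (x t) - f xstar) * t ^ 2 = t ^ 2 * (f (x t) - f xstar) := by ring
    _ ≤ V t := h1
    _ ≤ V t₀ := h2
end
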